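/- Let d ≥ 2 and let X ⊆ 𝕋 be a rotation set for m_d. If I is a gap of X whose length ℓ satisfies ℓ < 1/d (a minor gap), then m_d restricted to I is injective, the image m_d(I) is again a gap of X, and m_d(I) has length d·ℓ. -/

import Mathlib

open Set MeasureTheory ENNReal

noncomputable section

instance : Fact ((0:ℝ) < 1) := ⟨one_pos⟩

/-- The circle `ℝ/ℤ`. -/
abbrev Circle1 : Type := AddCircle (1 : ℝ)

/-- The multiplication-by-`d` map `m_d` on the circle. -/
def md (d : ℕ) : Circle1 → Circle1 := fun t => d • t

/-- `G : ℝ → ℝ` (monotone, commuting with `x ↦ x + 1`) is a lift of the circle map `g`. -/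
def IsLift (g : Circle1 → Circle1) (G : CircleDeg1Lift) : Prop :=
  ∀ x : ℝ, g ((x : ℝ) : Circle1) = ((G x : ℝ) : Circle1)

/-- `g` is a monotone degree-one circle map. -/
def IsMonotoneDeg1 (g : Circle1 → Circle1) : Prop :=
  ∃ G : CircleDeg1Lift, IsLift g G

/-- `ρ` is the rotation number of the monotone degree-one circle map `g`:
the residue class mod `ℤ` of the translation number of a lift of `g`. -/
def HasRotationNumber (g : Circle1 → Circle1) (ρ : Circle1) : Prop :=
  ∃ G : CircleDeg1Lift, IsLift g G ∧ ρ = ((G.translationNumber : ℝ) : Circle1)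

/-- `X` is a rotation set for `m_d`. -/
def IsRotationSet (d : ℕ) (X : Set Circle1) : Prop :=
  X.Nonempty ∧ IsCompact X ∧ md d '' X = X ∧
    ∃ g : Circle1 → Circle1, IsMonotoneDeg1 g ∧ ∀ t ∈ X, g t = md d t

/-- `X` is a rotation set for `m_d` with rotation number `ρ`. -/
def IsRotationSetWith (d : ℕ) (X : Set Circle1) (ρ : Circle1) : Prop :=
  X.Nonempty ∧ IsCompact X ∧ md d '' X = X ∧
    ∃ g : Circle1 → Circle1, (∀ t ∈ X, g t = md d t) ∧ HasRotationNumber g ρ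

/-- A gap of `X` is a connected component of the complement of `X`. -/
def IsGap (X : Set Circle1) (I : Set Circle1) : Prop :=
  ∃ t ∈ Xᶜ, I = connectedComponentIn Xᶜ t

/-- `C` is a periodic orbit (cycle) of `m_d`. -/
def IsPeriodicOrbit (d : ℕ) (C : Set Circle1) : Prop :=
  ∃ (t : Circle1) (n : ℕ), 0 < n ∧ (md d)^[n] t = t ∧
    C = Set.range (fun k : Fin n => (md d)^[(k : ℕ)] t)

/-- The number of points of `X` whose representative in `[0,1)` lies in `[0,1/2)`. -/
def s1 (X : Set Circle1) : ℕ :=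
  {t ∈ X | ((AddCircle.equivIco 1 0 t : ℝ) < 1 / 2)}.ncard


lemma circ_eq_iff {x y : ℝ} : ((x : ℝ) : Circle1) = ((y : ℝ) : Circle1) ↔ ∃ n : ℤ, x = y + n := by
  rw [show ((x : ℝ) : Circle1) = ((y : ℝ) : Circle1) ↔ x - y ∈ AddSubgroup.zmultiples (1:ℝ) from QuotientAddGroup.eq_iff_sub_mem, AddSubgroup.mem_zmultiples_iff]
  constructor
  · rintro ⟨k, hk⟩
    refine ⟨k, ?_⟩
    have : (k : ℝ) * 1 = x - y := by rw [← zsmul_eq_mul]; exact hk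
    linarith [this]
  · rintro ⟨n, hn⟩
    exact ⟨n, by rw [zsmul_eq_mul, mul_one]; linarith⟩

lemma md_coe (d : ℕ) (x : ℝ) : md d ((x : ℝ) : Circle1) = (((d : ℝ) * x : ℝ) : Circle1) := by
  show d • ((x : ℝ) : Circle1) = _
  rw [← AddCircle.coe_nsmul, nsmul_eq_mul]

lemma circ_continuous : Continuous (fun x : ℝ => ((x : ℝ) : Circle1)) :=
  AddCircle.continuous_mk' 1

lemma circ_isOpenMap : IsOpenMap (fun x : ℝ => ((x : ℝ) : Circle1)) :=
  QuotientAddGroup.isOpenMap_coe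

lemma circ_surjective : Function.Surjective (fun x : ℝ => ((x : ℝ) : Circle1)) :=
  QuotientAddGroup.mk_surjective

lemma vol_image_Ioo {a b : ℝ} (hab : a < b) (h1 : b ≤ a + 1) :
    volume ((fun x : ℝ => ((x : ℝ) : Circle1)) '' Ioo a b) = ENNReal.ofReal (b - a) := by
  have hopen : IsOpen ((fun x : ℝ => ((x : ℝ) : Circle1)) '' Ioo a b) :=
    circ_isOpenMap _ isOpen_Ioo
  have h := (AddCircle.measurePreserving_mk 1 a).measure_preimage
    hopen.measurableSet.nullMeasurableSet
  rw [Measure.restrict_apply' measurableSet_Ioc] at h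
  have hset : (fun x : ℝ => ((x : ℝ) : Circle1)) ⁻¹'
      ((fun x : ℝ => ((x : ℝ) : Circle1)) '' Ioo a b) ∩ Ioc a (a + 1) = Ioo a b := by
    ext x
    constructor
    · rintro ⟨⟨s, hs, hsx⟩, hx⟩
      obtain ⟨n, hn⟩ := circ_eq_iff.mp hsx
      have h1n : (n : ℝ) < 1 := by
        have := hs.2; have := hx.1; linarith
      have h2n : (-1 : ℝ) < (n : ℝ) := by
        have := hs.1; have := hx.2; linarith
      have : n = 0 := by
        have a1 : n < 1 := by exact_mod_cast h1n
        have a2 : -1 < n := by exact_mod_cast h2n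
        omega
      rw [this] at hn
      simp at hn
      rw [← hn]; exact hs
    · intro hx
      exact ⟨⟨x, hx, rfl⟩, ⟨hx.1, by linarith [hx.2]⟩⟩
  rw [hset] at h
  rw [← h, Real.volume_Ioo]

lemma arc_eq_component {X : Set Circle1} {a b : ℝ}
    (ha : ((a : ℝ) : Circle1) ∈ X) (hb : ((b : ℝ) : Circle1) ∈ X)
    (hdisj : ∀ x ∈ Ioo a b, ((x : ℝ) : Circle1) ∉ X)
    {t : Circle1} (ht : t ∈ (fun x : ℝ => ((x : ℝ) : Circle1)) '' Ioo a b) :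
    connectedComponentIn Xᶜ t = (fun x : ℝ => ((x : ℝ) : Circle1)) '' Ioo a b := by
  set S := (fun x : ℝ => ((x : ℝ) : Circle1)) '' Ioo a b with hS
  have hSsub : S ⊆ Xᶜ := by rintro u ⟨x, hx, rfl⟩; exact hdisj x hx
  have htX : t ∈ Xᶜ := hSsub ht
  have hSconn : IsPreconnected S :=
    isPreconnected_Ioo.image _ circ_continuous.continuousOn
  have hSopen : IsOpen S := circ_isOpenMap _ isOpen_Ioo
  have hIccClosed : IsClosed ((fun x : ℝ => ((x : ℝ) : Circle1)) '' Icc a b) :=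
    (isCompact_Icc.image circ_continuous).isClosed
  apply Subset.antisymm
  · have hK : IsPreconnected (connectedComponentIn Xᶜ t) := isPreconnected_connectedComponentIn
    have hKsub : connectedComponentIn Xᶜ t ⊆
        S ∪ ((fun x : ℝ => ((x : ℝ) : Circle1)) '' Icc a b)ᶜ := by
      intro u hu
      have huX : u ∈ Xᶜ := connectedComponentIn_subset _ _ hu
      by_cases hmem : u ∈ (fun x : ℝ => ((x : ℝ) : Circle1)) '' Icc a b
      · left
        obtain ⟨w, hw, rfl⟩ := hmem
        rcases eq_or_lt_of_le hw.1 with h | h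
        · exact absurd (h ▸ ha) huX
        rcases eq_or_lt_of_le hw.2 with h' | h'
        · exact absurd (h' ▸ hb) huX
        exact ⟨w, ⟨h, h'⟩, rfl⟩
      · exact Or.inr hmem
    have := hK.subset_left_of_subset_union hSopen hIccClosed.isOpen_compl
      (disjoint_compl_right.mono_left (image_mono Ioo_subset_Icc_self)) hKsub
      ⟨t, mem_connectedComponentIn htX, ht⟩
    exact this
  · exact hSconn.subset_connectedComponentIn ht hSsub

lemma component_structure {X : Set Circle1} (hXc : IsClosed X) (hXne : X.Nonempty)
    {t : Circle1} (ht : t ∈ Xᶜ) :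
    ∃ a b : ℝ, a < b ∧ b ≤ a + 1 ∧ ((a : ℝ) : Circle1) ∈ X ∧ ((b : ℝ) : Circle1) ∈ X ∧
      (∀ x ∈ Ioo a b, ((x : ℝ) : Circle1) ∉ X) ∧
      t ∈ (fun x : ℝ => ((x : ℝ) : Circle1)) '' Ioo a b ∧
      (fun x : ℝ => ((x : ℝ) : Circle1)) '' Ioo a b ⊆ connectedComponentIn Xᶜ t := by
  set U : Set ℝ := (fun x : ℝ => ((x : ℝ) : Circle1)) ⁻¹' Xᶜ with hU
  have hUopen : IsOpen U := (hXc.isOpen_compl).preimage circ_continuous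
  obtain ⟨t₁, rfl⟩ := circ_surjective t
  have ht₁ : t₁ ∈ U := ht
  set J := connectedComponentIn U t₁ with hJ
  have hJopen : IsOpen J := hUopen.connectedComponentIn
  have hJconn : IsPreconnected J := isPreconnected_connectedComponentIn
  have hJsub : J ⊆ U := connectedComponentIn_subset _ _
  have ht₁J : t₁ ∈ J := mem_connectedComponentIn ht₁
  have hOrd : OrdConnected J := hJconn.ordConnected
  -- a point not in U, with all integer translates not in U
  obtain ⟨x₀, hx₀⟩ := hXne
  obtain ⟨z, rfl⟩ := circ_surjective x₀
  have hzn : ∀ n : ℤ, z + n ∉ U := by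
    intro n hmem
    have heq : ((z + (n : ℝ) : ℝ) : Circle1) = ((z : ℝ) : Circle1) := circ_eq_iff.mpr ⟨n, rfl⟩
    exact hmem (show ((z + (n : ℝ) : ℝ) : Circle1) ∈ X from heq ▸ hx₀)
  have hnotJ : ∀ n : ℤ, z + (n : ℝ) ∉ J := fun n h => hzn n (hJsub h)
  -- bounds
  have hbddAbove : BddAbove J := by
    refine ⟨z + (⌈t₁ - z⌉ + 1 : ℤ), fun w hw => ?_⟩
    by_contra hlt
    push_neg at hlt
    have hgt : t₁ < z + ((⌈t₁ - z⌉ + 1 : ℤ) : ℝ) := by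
      push_cast; linarith [Int.le_ceil (t₁ - z)]
    exact hnotJ (⌈t₁ - z⌉ + 1) (hOrd.out ht₁J hw ⟨le_of_lt hgt, le_of_lt hlt⟩)
  have hbddBelow : BddBelow J := by
    refine ⟨z + (⌊t₁ - z⌋ - 1 : ℤ), fun w hw => ?_⟩
    by_contra hlt
    push_neg at hlt
    have hgt : z + ((⌊t₁ - z⌋ - 1 : ℤ) : ℝ) < t₁ := by
      push_cast; linarith [Int.floor_le (t₁ - z)]
    exact hnotJ (⌊t₁ - z⌋ - 1) (hOrd.out hw ht₁J ⟨le_of_lt hlt, le_of_lt hgt⟩)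
  set a := sInf J with ha
  set b := sSup J with hb
  have hJne : J.Nonempty := ⟨t₁, ht₁J⟩
  have haJ : a ∉ J := by
    intro haJ
    obtain ⟨ε, hε, hball⟩ := Metric.isOpen_iff.mp hJopen a haJ
    have : a - ε / 2 ∈ J := hball (by
      rw [Metric.mem_ball, Real.dist_eq, abs_of_nonpos (by linarith)]; linarith)
    linarith [csInf_le hbddBelow this]
  have hbJ : b ∉ J := by
    intro hbJ
    obtain ⟨ε, hε, hball⟩ := Metric.isOpen_iff.mp hJopen b hbJ
    have : b + ε / 2 ∈ J := hball (by
      rw [Metric.mem_ball, Real.dist_eq, abs_of_nonneg (by linarith)]; linarith)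
    linarith [le_csSup hbddAbove this]
  have hJIoo : J = Ioo a b := by
    apply Subset.antisymm
    · intro w hw
      have h1 : a ≤ w := csInf_le hbddBelow hw
      have h2 : w ≤ b := le_csSup hbddAbove hw
      refine ⟨lt_of_le_of_ne h1 ?_, lt_of_le_of_ne h2 ?_⟩
      · rintro rfl; exact haJ hw
      · rintro rfl; exact hbJ hw
    · exact IsConnected.Ioo_csInf_csSup_subset ⟨hJne, hJconn⟩ hbddBelow hbddAbove
  have hab : a < b := by
    have := hJIoo ▸ ht₁J; exact lt_trans this.1 this.2
  have ht₁mem : t₁ ∈ Ioo a b := hJIoo ▸ ht₁J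
  -- endpoints not in U
  have haU : a ∉ U := by
    intro haU
    obtain ⟨ε, hε, hball⟩ := Metric.isOpen_iff.mp hUopen a haU
    set ε' := min ε (b - a) with hε'
    have hε'pos : 0 < ε' := lt_min hε (by linarith)
    have hssub : Ioo (a - ε') b ⊆ U := by
      intro w hw
      by_cases hcase : w < a + ε'
      · refine hball ?_
        rw [Metric.mem_ball, Real.dist_eq, abs_lt]
        have h1 := hw.1
        have h2 := min_le_left ε (b - a)
        constructor <;> linarith
      · push_neg at hcase
        have h2 := min_le_right ε (b - a)
        exact hJsub (hJIoo ▸ (⟨by linarith, hw.2⟩ : w ∈ Ioo a b))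
    have hsJ : Ioo (a - ε') b ⊆ J :=
      isPreconnected_Ioo.subset_connectedComponentIn
        (⟨by linarith [ht₁mem.1], ht₁mem.2⟩ : t₁ ∈ Ioo (a - ε') b) hssub
    exact haJ (hsJ ⟨by linarith, hab⟩)
  have hbU : b ∉ U := by
    intro hbU
    obtain ⟨ε, hε, hball⟩ := Metric.isOpen_iff.mp hUopen b hbU
    set ε' := min ε (b - a) with hε'
    have hε'pos : 0 < ε' := lt_min hε (by linarith)
    have hssub : Ioo a (b + ε') ⊆ U := by
      intro w hw
      by_cases hcase : w > b - ε'
      · refine hball ?_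
        rw [Metric.mem_ball, Real.dist_eq, abs_lt]
        have h1 := hw.2
        have h2 := min_le_left ε (b - a)
        constructor <;> linarith
      · push_neg at hcase
        have h2 := min_le_right ε (b - a)
        exact hJsub (hJIoo ▸ (⟨hw.1, by linarith⟩ : w ∈ Ioo a b))
    have hsJ : Ioo a (b + ε') ⊆ J :=
      isPreconnected_Ioo.subset_connectedComponentIn
        (⟨ht₁mem.1, by linarith [ht₁mem.2]⟩ : t₁ ∈ Ioo a (b + ε')) hssub
    exact hbJ (hsJ ⟨hab, by linarith⟩)
  have haX : ((a : ℝ) : Circle1) ∈ X := by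
    by_contra h; exact haU h
  have hbX : ((b : ℝ) : Circle1) ∈ X := by
    by_contra h; exact hbU h
  -- b ≤ a + 1
  have hba1 : b ≤ a + 1 := by
    by_contra hgt
    push_neg at hgt
    set w := z - (⌊z - (a + (b - a - 1))⌋ : ℝ) with hw
    have hfr : w - (a + (b - a - 1)) = Int.fract (z - (a + (b - a - 1))) := by
      rw [hw, Int.fract]; ring
    have hw1 : a + (b - a - 1) ≤ w := by
      have := Int.fract_nonneg (z - (a + (b - a - 1))); linarith [hfr ▸ this]
    have hw2 : w < a + (b - a - 1) + 1 := by
      have := Int.fract_lt_one (z - (a + (b - a - 1))); linarith [hfr ▸ this]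
    have hwmem : w ∈ Ioo a b := ⟨by linarith, by linarith⟩
    have hwX : ((w : ℝ) : Circle1) = ((z : ℝ) : Circle1) :=
      circ_eq_iff.mpr ⟨-⌊z - (a + (b - a - 1))⌋, by push_cast; ring⟩
    have : w ∈ U := hJsub (hJIoo ▸ hwmem)
    rw [hU, mem_preimage] at this
    exact this (hwX ▸ hx₀)
  refine ⟨a, b, hab, hba1, haX, hbX, ?_, ⟨t₁, ht₁mem, rfl⟩, ?_⟩
  · intro x hx hxX
    have : x ∈ U := hJsub (hJIoo ▸ hx)
    exact this hxX
  · have hsub : (fun x : ℝ => ((x : ℝ) : Circle1)) '' Ioo a b ⊆ Xᶜ := by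
      rintro u ⟨x, hx, rfl⟩ hxX
      exact (hJsub (hJIoo ▸ hx)) hxX
    exact (isPreconnected_Ioo.image _ circ_continuous.continuousOn).subset_connectedComponentIn
      ⟨t₁, ht₁mem, rfl⟩ hsub

/-- A minor gap of a rotation set maps injectively onto a gap of
`d` times its length. -/
theorem minor_gap_maps_to_gap
    (d : ℕ) (hd : 2 ≤ d) (X : Set Circle1) (hX : IsRotationSet d X)
    (I : Set Circle1) (hI : IsGap X I) (hlen : volume I < 1 / (d : ℝ≥0∞)) :
    Set.InjOn (md d) I ∧ IsGap X (md d '' I) ∧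
      volume (md d '' I) = (d : ℝ≥0∞) * volume I := by
  obtain ⟨hXne, hXcomp, hXinv, g, ⟨G, hG⟩, hgX⟩ := hX
  have hXclosed : IsClosed X := hXcomp.isClosed
  obtain ⟨t₀, ht₀, hIeq⟩ := hI
  obtain ⟨a, b, hab, hba1, haX, hbX, hdisj, htmem, hsub⟩ :=
    component_structure hXclosed hXne ht₀
  have hd0 : (0 : ℝ) < d := by positivity
  -- length bound
  have hvol : volume ((fun x : ℝ => ((x : ℝ) : Circle1)) '' Ioo a b) = ENNReal.ofReal (b - a) :=
    vol_image_Ioo hab hba1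
  have hba : b - a < 1 / (d : ℝ) := by
    have hle : ENNReal.ofReal (b - a) ≤ volume I := by
      rw [← hvol]; exact measure_mono (hIeq ▸ hsub)
    have hlt : ENNReal.ofReal (b - a) < 1 / (d : ℝ≥0∞) := lt_of_le_of_lt hle hlen
    have : (1 : ℝ≥0∞) / (d : ℝ≥0∞) = ENNReal.ofReal (1 / (d : ℝ)) := by
      rw [ENNReal.ofReal_div_of_pos hd0, ENNReal.ofReal_one, ENNReal.ofReal_natCast]
    rw [this] at hlt
    exact (ENNReal.ofReal_lt_ofReal_iff (by positivity)).mp hlt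
  have hdba : (d : ℝ) * (b - a) < 1 := by
    have := mul_lt_mul_of_pos_left hba hd0
    rwa [mul_one_div, div_self hd0.ne'] at this
  have hring : (d : ℝ) * (b - a) = (d : ℝ) * b - (d : ℝ) * a := by ring
  -- identify I
  have hIdent : I = (fun x : ℝ => ((x : ℝ) : Circle1)) '' Ioo a b := by
    rw [hIeq]; exact arc_eq_component haX hbX hdisj htmem
  -- lift facts: for points of X, G x = d x + (integer)
  have hlift : ∀ x : ℝ, ((x : ℝ) : Circle1) ∈ X → ∃ n : ℤ, G x = (d : ℝ) * x + n := by
    intro x hx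
    have h1 : g ((x : ℝ) : Circle1) = (((d : ℝ) * x : ℝ) : Circle1) := by
      rw [hgX _ hx, md_coe]
    have h2 := hG x
    rw [h1] at h2
    obtain ⟨n, hn⟩ := circ_eq_iff.mp h2.symm
    exact ⟨n, hn⟩
  obtain ⟨p, hp⟩ := hlift a haX
  obtain ⟨q, hq⟩ := hlift b hbX
  -- q = p
  have hpq : q = p := by
    have h1 : G a ≤ G b := G.monotone hab.le
    have h2 : G b ≤ G a + 1 := by
      have := G.monotone (show b ≤ a + 1 from hba1)
      rwa [G.map_add_one] at this
    rw [hp, hq] at h1 h2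
    have i1 : (p : ℝ) - q < 1 := by linarith
    have i2 : (q : ℝ) - p < 1 := by linarith [mul_pos hd0 (sub_pos.mpr hab)]
    have j1 : p - q < 1 := by exact_mod_cast (by push_cast; linarith : ((p - q : ℤ) : ℝ) < 1)
    have j2 : q - p < 1 := by exact_mod_cast (by push_cast; linarith : ((q - p : ℤ) : ℝ) < 1)
    omega
  -- key: image interval avoids X
  have hdisj' : ∀ x ∈ Ioo ((d : ℝ) * a) ((d : ℝ) * b), ((x : ℝ) : Circle1) ∉ X := by
    intro x hx hxX
    have : ((x : ℝ) : Circle1) ∈ md d '' X := hXinv.symm ▸ hxX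
    obtain ⟨s, hsX, hs⟩ := this
    obtain ⟨y₁, rfl⟩ := circ_surjective s
    rw [md_coe] at hs
    obtain ⟨n, hn⟩ := circ_eq_iff.mp hs
    -- d * y₁ = x + n
    set j : ℤ := n % d with hj
    set m : ℤ := n / d with hm
    have hnd : (d : ℤ) * m + j = n := Int.mul_ediv_add_emod n d
    have hj0 : 0 ≤ j := Int.emod_nonneg n (by exact_mod_cast (by omega : d ≠ 0))
    have hjd : j < d := Int.emod_lt_of_pos n (by exact_mod_cast (by omega : 0 < d))
    set y := y₁ - (m : ℝ) with hy
    have hyX : ((y : ℝ) : Circle1) ∈ X := by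
      have : ((y : ℝ) : Circle1) = ((y₁ : ℝ) : Circle1) := circ_eq_iff.mpr ⟨-m, by push_cast; ring⟩
      rw [this]; exact hsX
    have hdy : (d : ℝ) * y = x + (j : ℝ) := by
      have hnr : ((d : ℤ) * m + j : ℝ) = (n : ℝ) := by exact_mod_cast congrArg (Int.cast : ℤ → ℝ) hnd
      push_cast at hnr
      rw [hy]; rw [mul_sub, hn]; push_cast; linarith
    rcases eq_or_lt_of_le hj0 with hj00 | hj1
    · -- j = 0 : y ∈ Ioo a b, contradiction
      have hdy0 : (d : ℝ) * y = x := by rw [hdy, ← hj00]; simp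
      have hymem : y ∈ Ioo a b := by
        constructor
        · by_contra hle; push_neg at hle
          have := mul_le_mul_of_nonneg_left hle hd0.le
          rw [hdy0] at this; linarith [hx.1]
        · by_contra hle; push_neg at hle
          have := mul_le_mul_of_nonneg_left hle hd0.le
          rw [hdy0] at this; linarith [hx.2]
      exact hdisj y hymem hyX
    · -- 1 ≤ j
      have hj1' : (1 : ℝ) ≤ (j : ℝ) := by exact_mod_cast hj1
      have hjd' : (j : ℝ) ≤ (d : ℝ) - 1 := by
        have : j ≤ (d : ℤ) - 1 := by omega
        exact_mod_cast this
      have hyb : b < y := by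
        have h1 : (d : ℝ) * b < (d : ℝ) * y := by
          rw [hdy]; linarith [hx.1]
        exact lt_of_mul_lt_mul_left h1 hd0.le
      have hya : y < a + 1 := by
        have h1 : (d : ℝ) * y < (d : ℝ) * (a + 1) := by
          rw [hdy, mul_add, mul_one]; linarith [hx.2]
        exact lt_of_mul_lt_mul_left h1 hd0.le
      obtain ⟨r, hr⟩ := hlift y hyX
      have hGby : G b ≤ G y := G.monotone hyb.le
      have hGya : G y ≤ G a + 1 := by
        have := G.monotone hya.le
        rwa [G.map_add_one] at this
      rw [hq, hpq, hr] at hGby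
      rw [hr, hp] at hGya
      -- from hGby : d b + p ≤ d y + r = x + j + r, x < d b : p < j + r
      have i1 : (p : ℝ) < (j : ℝ) + r := by
        rw [hdy] at hGby; linarith [hx.2]
      have i2 : (j : ℝ) + r < (p : ℝ) + 1 := by
        rw [hdy] at hGya; linarith [hx.1]
      have k1 : p < j + r := by exact_mod_cast (by push_cast; linarith : ((p : ℝ)) < ((j + r : ℤ) : ℝ))
      have k2 : j + r < p + 1 := by exact_mod_cast (by push_cast; linarith : (((j + r : ℤ)) : ℝ) < ((p + 1 : ℤ) : ℝ))
      omega
  -- image of I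
  have himg : md d '' I = (fun x : ℝ => ((x : ℝ) : Circle1)) '' Ioo ((d : ℝ) * a) ((d : ℝ) * b) := by
    rw [hIdent, ← image_comp]
    ext u
    simp only [mem_image, Function.comp]
    constructor
    · rintro ⟨x, hx, rfl⟩
      exact ⟨(d : ℝ) * x, ⟨mul_lt_mul_of_pos_left hx.1 hd0, mul_lt_mul_of_pos_left hx.2 hd0⟩,
        (md_coe d x).symm⟩
    · rintro ⟨y, hy, rfl⟩
      refine ⟨y / (d : ℝ), ⟨?_, ?_⟩, ?_⟩
      · rw [lt_div_iff₀ hd0]; linarith [hy.1]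
      · rw [div_lt_iff₀ hd0]; linarith [hy.2]
      · rw [md_coe]; congr 1; field_simp
  have hdab : (d : ℝ) * a < (d : ℝ) * b := mul_lt_mul_of_pos_left hab hd0
  have haX' : (((d : ℝ) * a : ℝ) : Circle1) ∈ X := by
    have : md d ((a : ℝ) : Circle1) ∈ md d '' X := mem_image_of_mem _ haX
    rw [hXinv, md_coe] at this; exact this
  have hbX' : (((d : ℝ) * b : ℝ) : Circle1) ∈ X := by
    have : md d ((b : ℝ) : Circle1) ∈ md d '' X := mem_image_of_mem _ hbX
    rw [hXinv, md_coe] at this; exact this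
  refine ⟨?_, ?_, ?_⟩
  · -- injectivity
    rw [hIdent]
    rintro s₁ ⟨x₁, hx₁, rfl⟩ s₂ ⟨x₂, hx₂, rfl⟩ heq
    simp only [md_coe] at heq
    obtain ⟨n, hn⟩ := circ_eq_iff.mp heq
    have hx12 : |(d : ℝ) * x₁ - (d : ℝ) * x₂| < 1 := by
      rw [show (d : ℝ) * x₁ - (d : ℝ) * x₂ = (d : ℝ) * (x₁ - x₂) by ring, abs_mul,
        abs_of_pos hd0]
      have h1 : |x₁ - x₂| < b - a := by
        rw [abs_lt]; constructor <;> linarith [hx₁.1, hx₁.2, hx₂.1, hx₂.2]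
      calc (d : ℝ) * |x₁ - x₂| < (d : ℝ) * (b - a) := mul_lt_mul_of_pos_left h1 hd0
        _ < 1 := hdba
    have hne : (n : ℝ) = (d : ℝ) * x₁ - (d : ℝ) * x₂ := by linarith [hn]
    have hn0 : n = 0 := by
      have h1 : |(n : ℝ)| < 1 := hne ▸ hx12
      rw [abs_lt] at h1
      have a1 : n < 1 := by exact_mod_cast h1.2
      have a2 : -1 < n := by exact_mod_cast h1.1
      omega
    have hxx : x₁ = x₂ := by
      rw [hn0] at hn
      push_cast at hn
      have h' : (d : ℝ) * x₁ = (d : ℝ) * x₂ := by linarith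
      exact mul_left_cancel₀ hd0.ne' h'
    rw [hxx]
  · -- gap
    rw [himg]
    have hcmem : (d : ℝ) * a + ((d : ℝ) * b - (d : ℝ) * a) / 2 ∈ Ioo ((d:ℝ)*a) ((d:ℝ)*b) := by
      constructor <;> linarith [hdab]
    refine ⟨(((d : ℝ) * a + ((d : ℝ) * b - (d : ℝ) * a) / 2 : ℝ) : Circle1),
      hdisj' _ hcmem, ?_⟩
    exact (arc_eq_component haX' hbX' hdisj' ⟨_, hcmem, rfl⟩).symm
  · -- volume
    rw [himg, hIdent, vol_image_Ioo hab hba1, vol_image_Ioo hdab (by linarith),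
      show (d : ℝ) * b - (d : ℝ) * a = (d : ℝ) * (b - a) by ring,
      ENNReal.ofReal_mul hd0.le, ENNReal.ofReal_natCast]
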